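/- Let p ∈ (0, 1/2], define f : (0,∞) → ℝ by f(x) = (x/2)·( 1/(p·x + 1 − p) + 1/((1−p)·x + p) ), and let r be the scalar-curvature function of f. Then r has a strict local maximum at the origin: there exists ε > 0 such that r(a) < 6 + 36·f″(1) for all a with 0 < |a| < ε, where lim_{a→0} r(a) = 6 + 36·f″(1). -/

import Mathlib

open Filter Topology

lemma hasDerivAt_g (p x : ℝ) (hu : p*x + 1 - p ≠ 0) (hv : (1-p)*x + p ≠ 0) :
    HasDerivAt (fun y => y/2 * (1/(p*y + 1 - p) + 1/((1-p)*y + p)))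
      ((1-p)/2 * ((p*x + 1 - p)^2)⁻¹ + p/2 * (((1-p)*x + p)^2)⁻¹) x := by
  have h1 : HasDerivAt (fun y : ℝ => p*y + 1 - p) p x := by
    simpa using (((hasDerivAt_id x).const_mul p).add_const 1).sub_const p
  have h2 : HasDerivAt (fun y : ℝ => (1-p)*y + p) (1-p) x := by
    simpa using ((hasDerivAt_id x).const_mul (1-p)).add_const p
  have hi1 := h1.inv hu
  have hi2 := h2.inv hv
  have hx : HasDerivAt (fun y : ℝ => y/2) (1/2) x := by
    simpa using (hasDerivAt_id x).div_const 2
  have := hx.mul (hi1.add hi2)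
  convert this using 1
  · rfl
  · rfl
  · funext y; simp [one_div]
  · simp only [Pi.add_apply, Pi.inv_apply]
    field_simp
    ring

lemma hasDerivAt_g1 (p x : ℝ) (hu : p*x + 1 - p ≠ 0) (hv : (1-p)*x + p ≠ 0) :
    HasDerivAt (fun y => (1-p)/2 * ((p*y + 1 - p)^2)⁻¹ + p/2 * (((1-p)*y + p)^2)⁻¹)
      (-(p*(1-p)) * (((p*x + 1 - p)^3)⁻¹ + (((1-p)*x + p)^3)⁻¹)) x := by
  have h1 : HasDerivAt (fun y : ℝ => p*y + 1 - p) p x := by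
    simpa using (((hasDerivAt_id x).const_mul p).add_const 1).sub_const p
  have h2 : HasDerivAt (fun y : ℝ => (1-p)*y + p) (1-p) x := by
    simpa using ((hasDerivAt_id x).const_mul (1-p)).add_const p
  have hs1 := ((h1.pow 2).inv (pow_ne_zero 2 hu)).const_mul ((1-p)/2)
  have hs2 := ((h2.pow 2).inv (pow_ne_zero 2 hv)).const_mul (p/2)
  have := hs1.add hs2
  convert this using 1
  · rfl
  · rfl
  · rfl
  simp only [Pi.pow_apply]
  field_simp
  ring

lemma Hpos (u t : ℝ) (hu0 : 0 ≤ u) (hu1 : u < 1) (ht0 : 0 ≤ t) (ht1 : t < 1) :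
    0 < 20*(1+2*u) - 12*u*(5+3*u)*t + 36*u^2*t^2 := by
  have h1 : 0 ≤ u*(1-t) := mul_nonneg hu0 (by linarith)
  have hut : u*t ≤ 1 := by nlinarith
  have h2 : (0:ℝ) ≤ 10 - 6*(u*t) := by linarith
  nlinarith [mul_nonneg h1 h2]

/-- The scalar-curvature function `r(a)` of the monotone metric on `2×2` density
matrices induced by `f`, at the state with eigenvalues `(1±a)/2`;
here `c = (1−a)/(1+a)`. -/
noncomputable def scurv (f : ℝ → ℝ) (a : ℝ) : ℝ :=
  14*(a - 1) * (deriv f ((1-a)/(1+a)))^2 / ((1+a)^3 * (f ((1-a)/(1+a)))^2)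
    + 2*(a^2 + 7*a - 6) * deriv f ((1-a)/(1+a)) / ((1+a)^2 * a * f ((1-a)/(1+a)))
    + 8*(1 - a) * iteratedDeriv 2 f ((1-a)/(1+a)) / ((1+a)^3 * f ((1-a)/(1+a)))
    + 2*(1+a) * f ((1-a)/(1+a)) / a^2
    + (3*a^3 + 5*a^2 + 8*a - 4) / (2*(1+a)*a^2)

set_option maxHeartbeats 2000000

/-- for `p ∈ (0, 1/2]`, the scalar curvature of the metric coming
from `f(x) = (x/2)(1/(px+1−p) + 1/((1−p)x+p))` has a strict local maximum at the
origin. -/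
theorem stmt_14 (p : ℝ) (hp0 : 0 < p) (hp1 : p ≤ 1/2)
    (f : ℝ → ℝ)
    (hf : ∀ x > (0:ℝ), f x = x/2 * (1/(p*x + 1 - p) + 1/((1-p)*x + p))) :
    Tendsto (scurv f) (𝓝[≠] 0) (𝓝 (6 + 36 * iteratedDeriv 2 f 1)) ∧
    ∃ ε > (0:ℝ), ∀ a : ℝ, 0 < |a| → |a| < ε →
      scurv f a < 6 + 36 * iteratedDeriv 2 f 1 := by
  have hpos : ∀ x > (0:ℝ), 0 < p*x + 1 - p ∧ 0 < (1-p)*x + p := by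
    intro x hx
    constructor <;> nlinarith
  have hfg : ∀ x > (0:ℝ), f =ᶠ[𝓝 x] fun y => y/2 * (1/(p*y + 1 - p) + 1/((1-p)*y + p)) := by
    intro x hx
    exact Filter.eventuallyEq_of_mem (isOpen_Ioi.mem_nhds hx) (fun y hy => hf y hy)
  have hd1 : ∀ x > (0:ℝ), deriv f x
      = (1-p)/2 * ((p*x + 1 - p)^2)⁻¹ + p/2 * (((1-p)*x + p)^2)⁻¹ := by
    intro x hx
    rw [(hfg x hx).deriv_eq]
    exact (hasDerivAt_g p x (hpos x hx).1.ne' (hpos x hx).2.ne').deriv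
  have hd2 : ∀ x > (0:ℝ), iteratedDeriv 2 f x
      = -(p*(1-p)) * (((p*x + 1 - p)^3)⁻¹ + (((1-p)*x + p)^3)⁻¹) := by
    intro x hx
    have h2 : iteratedDeriv 2 f = deriv (deriv f) := by
      rw [iteratedDeriv_succ, iteratedDeriv_one]
    rw [h2]
    have hev : deriv f =ᶠ[𝓝 x]
        fun y => (1-p)/2 * ((p*y + 1 - p)^2)⁻¹ + p/2 * (((1-p)*y + p)^2)⁻¹ :=
      Filter.eventuallyEq_of_mem (isOpen_Ioi.mem_nhds hx) (fun y hy => hd1 y hy)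
    rw [hev.deriv_eq]
    exact (hasDerivAt_g1 p x (hpos x hx).1.ne' (hpos x hx).2.ne').deriv
  have h21 : iteratedDeriv 2 f 1 = -(2*p*(1-p)) := by
    rw [hd2 1 one_pos]
    have e1 : p*(1:ℝ) + 1 - p = 1 := by ring
    have e2 : (1-p)*(1:ℝ) + p = 1 := by ring
    rw [e1, e2]
    norm_num
    ring
  have htarget : 6 + 36 * iteratedDeriv 2 f 1 = 6 - 72*p*(1-p) := by
    rw [h21]; ring
  -- key identity
  have hkey : ∀ a : ℝ, 0 < |a| → |a| < 1 → scurv f a =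
      (6 - 72*p*(1-p)) - a^2*((4*p*(1-p))*(20*(1+2*(1-2*p)^2)
        - 12*(1-2*p)^2*(5+3*(1-2*p)^2)*a^2 + 36*((1-2*p)^2)^2*a^4))
        / (2*(1-a^2)*(1-(1-2*p)^2*a^2)^2) := by
    intro a ha0 ha1
    have ha0' : a ≠ 0 := by simpa [abs_pos] using ha0
    obtain ⟨ham', hap'⟩ := abs_lt.mp ha1
    have hap : (0:ℝ) < 1 + a := by linarith
    have ham : (0:ℝ) < 1 - a := by linarith
    have hs0 : (0:ℝ) ≤ 1 - 2*p := by linarith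
    have hs1 : 1 - 2*p < 1 := by linarith
    have hc : (0:ℝ) < (1-a)/(1+a) := div_pos ham hap
    have hsq1 : (1-2*p)^2 ≤ 1 := by nlinarith
    have hsq2 : a^2 < 1 := by nlinarith
    have hw : (0:ℝ) < 1 - (1-2*p)^2*a^2 := by
      nlinarith [mul_le_mul_of_nonneg_right hsq1 (sq_nonneg a)]
    have ha2 : (0:ℝ) < 1 - a^2 := by nlinarith
    set c := (1-a)/(1+a) with hcdef
    have hu := (hpos c hc).1
    have hv := (hpos c hc).2
    have hueq : p*c + 1 - p = (1 + (1-2*p)*a)/(1+a) := by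
      rw [hcdef]; field_simp; ring
    have hveq : (1-p)*c + p = (1 - (1-2*p)*a)/(1+a) := by
      rw [hcdef]; field_simp; ring
    have hA : (0:ℝ) < 1 + (1-2*p)*a := by nlinarith [mul_nonneg hs0 hap.le]
    have hB : (0:ℝ) < 1 - (1-2*p)*a := by nlinarith [mul_nonneg hs0 ham.le]
    have hA' : 1 + a*(1-2*p) ≠ 0 := by nlinarith
    have hB' : 1 - a*(1-2*p) ≠ 0 := by nlinarith
    have hw' : 1 - a^2*(1-2*p)^2 ≠ 0 := by nlinarith
    have hA'' : 1 + (1-p*2)*a ≠ 0 := by contrapose! hA'; linarith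
    have hB'' : 1 - (1-p*2)*a ≠ 0 := by contrapose! hB'; linarith
    have hw'' : 1 - (1-p*2)^2*a^2 ≠ 0 := by contrapose! hw'; linarith
    have hfc : f c = (1-a)/(1-(1-2*p)^2*a^2) := by
      rw [hf c hc, hueq, hveq, hcdef]
      field_simp
      ring
    have hd1c : deriv f c = (1+a)^2*(1-2*(1-2*p)^2*a+(1-2*p)^2*a^2)
        / (2*(1-(1-2*p)^2*a^2)^2) := by
      rw [hd1 c hc, hueq, hveq]
      field_simp
      ring
    have hd2c : iteratedDeriv 2 f c = -((4*p*(1-p))*(1+a)^3*(1+3*(1-2*p)^2*a^2))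
        / (2*(1-(1-2*p)^2*a^2)^3) := by
      rw [hd2 c hc, hueq, hveq]
      field_simp
      ring
    rw [scurv, ← hcdef, hfc, hd1c, hd2c]
    field_simp
    ring
  constructor
  · -- the limit
    rw [htarget]
    have hcont : Tendsto (fun a : ℝ => (6 - 72*p*(1-p)) - a^2*((4*p*(1-p))*(20*(1+2*(1-2*p)^2)
        - 12*(1-2*p)^2*(5+3*(1-2*p)^2)*a^2 + 36*((1-2*p)^2)^2*a^4))
        / (2*(1-a^2)*(1-(1-2*p)^2*a^2)^2)) (𝓝 0) (𝓝 (6 - 72*p*(1-p))) := by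
      have : ContinuousAt (fun a : ℝ => (6 - 72*p*(1-p)) - a^2*((4*p*(1-p))*(20*(1+2*(1-2*p)^2)
          - 12*(1-2*p)^2*(5+3*(1-2*p)^2)*a^2 + 36*((1-2*p)^2)^2*a^4))
          / (2*(1-a^2)*(1-(1-2*p)^2*a^2)^2)) 0 := by
        apply ContinuousAt.sub continuousAt_const
        apply ContinuousAt.div (by fun_prop) (by fun_prop)
        norm_num
      have h0 : (6 - 72*p*(1-p)) - (0:ℝ)^2*((4*p*(1-p))*(20*(1+2*(1-2*p)^2)
          - 12*(1-2*p)^2*(5+3*(1-2*p)^2)*(0:ℝ)^2 + 36*((1-2*p)^2)^2*(0:ℝ)^4))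
          / (2*(1-(0:ℝ)^2)*(1-(1-2*p)^2*(0:ℝ)^2)^2) = 6 - 72*p*(1-p) := by
        norm_num
      convert this.tendsto using 2
      norm_num
    have hev : ∀ᶠ a in 𝓝[≠] (0:ℝ), scurv f a = (6 - 72*p*(1-p)) - a^2*((4*p*(1-p))*(20*(1+2*(1-2*p)^2)
        - 12*(1-2*p)^2*(5+3*(1-2*p)^2)*a^2 + 36*((1-2*p)^2)^2*a^4))
        / (2*(1-a^2)*(1-(1-2*p)^2*a^2)^2) := by
      have h1 : ∀ᶠ a in 𝓝 (0:ℝ), |a| < 1 := by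
        have : Set.Ioo (-1:ℝ) 1 ∈ 𝓝 (0:ℝ) := Ioo_mem_nhds (by norm_num) (by norm_num)
        exact Filter.eventually_of_mem this (fun a ha => abs_lt.mpr ⟨ha.1, ha.2⟩)
      filter_upwards [h1.filter_mono nhdsWithin_le_nhds, self_mem_nhdsWithin] with a h1a h2a
      exact hkey a (abs_pos.mpr h2a) h1a
    exact Tendsto.congr' (Filter.EventuallyEq.symm hev) (hcont.mono_left nhdsWithin_le_nhds)
  · refine ⟨1, one_pos, fun a ha0 ha1 => ?_⟩
    rw [hkey a ha0 ha1, htarget]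
    have ha0' : a ≠ 0 := by simpa [abs_pos] using ha0
    obtain ⟨ham', hap'⟩ := abs_lt.mp ha1
    have hs0 : (0:ℝ) ≤ 1 - 2*p := by linarith
    have hs1 : 1 - 2*p < 1 := by linarith
    have hu0 : (0:ℝ) ≤ (1-2*p)^2 := sq_nonneg _
    have hu1 : (1-2*p)^2 < 1 := by nlinarith
    have ht0 : (0:ℝ) ≤ a^2 := sq_nonneg _
    have ht1 : a^2 < 1 := by nlinarith
    have hH := Hpos ((1-2*p)^2) (a^2) hu0 hu1 ht0 ht1
    have hnum : 0 < a^2*((4*p*(1-p))*(20*(1+2*(1-2*p)^2)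
        - 12*(1-2*p)^2*(5+3*(1-2*p)^2)*a^2 + 36*((1-2*p)^2)^2*a^4)) := by
      have ha2 : 0 < a^2 := by positivity
      have hp' : 0 < 4*p*(1-p) := by nlinarith
      have : 0 < 20*(1+2*(1-2*p)^2) - 12*(1-2*p)^2*(5+3*(1-2*p)^2)*a^2
          + 36*((1-2*p)^2)^2*a^4 := by nlinarith [hH]
      positivity
    have hden : 0 < 2*(1-a^2)*(1-(1-2*p)^2*a^2)^2 := by
      have hw : (0:ℝ) < 1 - (1-2*p)^2*a^2 := by
        nlinarith [mul_le_mul_of_nonneg_right hu1.le (sq_nonneg a)]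
      have ha2' : (0:ℝ) < 1 - a^2 := by linarith
      exact mul_pos (mul_pos two_pos ha2') (pow_pos hw 2)
    have := div_pos hnum hden
    linarith
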